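/- arXiv:2403.06671 — 2 statements merged into one kernel-verified Lean document; each statement's English description precedes it below -/
import Mathlib

section
/- Let G = (V, E, w) be a weighted graph, and let W ⊆ V with |W| ≥ 2 such that G[W] is a clique. Let w_W = min{w(u,v) : {u,v} ∈ E(W)}. If S ⊆ V satisfies κ_G(S) < (2/9)·|W|²·w_W and |S ∩ W| > |W \ S|, then in fact |S ∩ W| > (2/3)·|W|. -/
open Finset

/-- If `W` induces a clique with all edge weights at least `wW`, `|W| ≥ 2`,
`κ(S) < (2/9)|W|² wW` and `|S ∩ W| > |W \ S|`, then in fact `|S ∩ W| > (2/3)|W|`. -/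
theorem stmt_1 {V : Type*} [Fintype V] [DecidableEq V]
    (w : V → V → ℝ) (hsymm : ∀ u v, w u v = w v u) (hnonneg : ∀ u v, 0 ≤ w u v)
    (W : Finset V) (hW : 2 ≤ W.card)
    (wW : ℝ) (hwW : 0 < wW)
    (hclique : ∀ u ∈ W, ∀ v ∈ W, u ≠ v → wW ≤ w u v)
    (S : Finset V)
    (hκ : ∑ u ∈ S, ∑ v ∈ Sᶜ, w u v < (2 / 9) * (W.card : ℝ) ^ 2 * wW)
    (hmaj : (W \ S).card < (S ∩ W).card) :
    (2 / 3 : ℝ) * W.card < (S ∩ W).card := by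

  by_contra hcon
  push_neg at hcon
  set a := (S ∩ W).card with ha
  set b := (W \ S).card with hb
  have hab : b + a = W.card := by
    rw [ha, hb, inter_comm]
    exact card_sdiff_add_card_inter W S
  have hsub2 : W \ S ⊆ Sᶜ := fun v hv => by
    simp only [mem_compl]
    exact (mem_sdiff.mp hv).2
  have key : (a : ℝ) * b * wW ≤ ∑ u ∈ S, ∑ v ∈ Sᶜ, w u v := by
    calc (a:ℝ) * b * wW = ∑ _u ∈ S ∩ W, ∑ _v ∈ W \ S, wW := by
          rw [Finset.sum_const, Finset.sum_const]
          push_cast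
          ring
      _ ≤ ∑ u ∈ S ∩ W, ∑ v ∈ W \ S, w u v := by
          apply Finset.sum_le_sum
          intro u hu
          apply Finset.sum_le_sum
          intro v hv
          exact hclique u (mem_of_mem_inter_right hu) v (mem_sdiff.mp hv).1
            (by rintro rfl; exact (mem_sdiff.mp hv).2 (mem_of_mem_inter_left hu))
      _ ≤ ∑ u ∈ S ∩ W, ∑ v ∈ Sᶜ, w u v := by
          apply Finset.sum_le_sum
          intro u _
          exact Finset.sum_le_sum_of_subset_of_nonneg hsub2 (fun v _ _ => hnonneg u v)
      _ ≤ ∑ u ∈ S, ∑ v ∈ Sᶜ, w u v := by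
          apply Finset.sum_le_sum_of_subset_of_nonneg inter_subset_left
          intro u _ _
          exact Finset.sum_nonneg fun v _ => hnonneg u v
  have hmaj' : (b:ℝ) < a := by exact_mod_cast hmaj
  have hn : (W.card : ℝ) = b + a := by exact_mod_cast hab.symm
  rw [hn] at hκ hcon
  have h1 : (0:ℝ) ≤ 2*a - b := by linarith
  have h2 : (0:ℝ) ≤ 2*b - a := by linarith
  nlinarith [mul_nonneg (mul_nonneg h1 h2) hwW.le, key, hκ]
end

section
/- Let G = (V, E, w) be a weighted graph and W ⊆ V with |W| ≥ 2 such that G[W] is a clique, and let w_W = min{w(u,v) : {u,v} ∈ E(W)}. Define T_G(W) = {S ⊆ V : κ_G(S) < (2/9)·|W|²·w_W and |S ∩ W| > |W \ S|}. Then T_G(W) is a κ_G-tangle of order (2/9)·|W|²·w_W; that is: (T.0) every S ∈ T_G(W) satisfies κ_G(S) < (2/9)|W|²w_W; (T.1) for every S ⊆ V with κ_G(S) < (2/9)|W|²w_W, either S ∈ T_G(W) or V\S ∈ T_G(W); (T.2) any three members of T_G(W) have nonempty intersection; (T.3) no singleton {x} belongs to T_G(W). -/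
open Finset

/-- The set system `T_G(W)` induced by a clique `W` with `|W| ≥ 2` is a tangle of
order `(2/9)|W]² w_W`: it satisfies (T.0)–(T.3). -/
theorem stmt_2 {V : Type*} [Fintype V] [DecidableEq V]
    (w : V → V → ℝ) (hsymm : ∀ u v, w u v = w v u) (hnonneg : ∀ u v, 0 ≤ w u v)
    (W : Finset V) (hW : 2 ≤ W.card)
    (wW : ℝ) (hwW : 0 < wW)
    (hclique : ∀ u ∈ W, ∀ v ∈ W, u ≠ v → wW ≤ w u v)
    (κ : Finset V → ℝ) (hκ : ∀ S, κ S = ∑ u ∈ S, ∑ v ∈ Sᶜ, w u v)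
    (k : ℝ) (hk : k = (2 / 9) * (W.card : ℝ) ^ 2 * wW)
    (T : Set (Finset V))
    (hT : ∀ S : Finset V, S ∈ T ↔ κ S < k ∧ (W \ S).card < (S ∩ W).card) :
    (∀ S ∈ T, κ S < k) ∧
    (∀ S : Finset V, κ S < k → S ∈ T ∨ Sᶜ ∈ T) ∧
    (∀ S₁ ∈ T, ∀ S₂ ∈ T, ∀ S₃ ∈ T, (S₁ ∩ S₂ ∩ S₃).Nonempty) ∧
    (∀ x : V, ({x} : Finset V) ∉ T) := by
  -- key lower bound: κ S ≥ |S∩W| * |W\S| * wW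
  have key : ∀ S : Finset V, ((S ∩ W).card : ℝ) * ((W \ S).card : ℝ) * wW ≤ κ S := by
    intro S
    rw [hκ]
    have hcardeq : (W \ S) = Sᶜ ∩ W := by
      ext x; simp [Finset.mem_sdiff, Finset.mem_inter, Finset.mem_compl, and_comm]
    have hlow : ((S ∩ W).card : ℝ) * ((W \ S).card : ℝ) * wW
        ≤ ∑ u ∈ S ∩ W, ∑ v ∈ Sᶜ ∩ W, w u v := by
      rw [hcardeq]
      calc ((S ∩ W).card : ℝ) * ((Sᶜ ∩ W).card : ℝ) * wW
          = ∑ u ∈ S ∩ W, ∑ v ∈ Sᶜ ∩ W, wW := by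
            rw [Finset.sum_const, Finset.sum_const, nsmul_eq_mul, nsmul_eq_mul]; ring
        _ ≤ _ := Finset.sum_le_sum fun u hu => Finset.sum_le_sum fun v hv => by
            simp only [Finset.mem_inter, Finset.mem_compl] at hu hv
            exact hclique u hu.2 v hv.2 (fun h => hv.1 (h ▸ hu.1))
    have hsub : ∑ u ∈ S ∩ W, ∑ v ∈ Sᶜ ∩ W, w u v ≤ ∑ u ∈ S, ∑ v ∈ Sᶜ, w u v := by
      calc ∑ u ∈ S ∩ W, ∑ v ∈ Sᶜ ∩ W, w u v
          ≤ ∑ u ∈ S ∩ W, ∑ v ∈ Sᶜ, w u v :=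
            Finset.sum_le_sum fun u _ =>
              Finset.sum_le_sum_of_subset_of_nonneg Finset.inter_subset_left
                (fun v _ _ => hnonneg u v)
        _ ≤ ∑ u ∈ S, ∑ v ∈ Sᶜ, w u v :=
            Finset.sum_le_sum_of_subset_of_nonneg Finset.inter_subset_left
              (fun u _ _ => Finset.sum_nonneg fun v _ => hnonneg u v)
    linarith
  have hcompl : ∀ S : Finset V, κ Sᶜ = κ S := by
    intro S
    rw [hκ, hκ, compl_compl, Finset.sum_comm]
    exact Finset.sum_congr rfl fun u _ => Finset.sum_congr rfl fun v _ => hsymm _ _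
  have hcard1 : ∀ S : Finset V, W \ Sᶜ = S ∩ W := by
    intro S; ext x; simp [Finset.mem_sdiff, Finset.mem_inter, and_comm]
  have hcard2 : ∀ S : Finset V, Sᶜ ∩ W = W \ S := by
    intro S; ext x; simp [Finset.mem_sdiff, Finset.mem_inter, and_comm]
  have hsum : ∀ S : Finset V, (S ∩ W).card + (W \ S).card = W.card := by
    intro S; rw [Finset.inter_comm]; exact Finset.card_inter_add_card_sdiff W S
  refine ⟨fun S hS => ((hT S).1 hS).1, ?_, ?_, ?_⟩
  · -- (T.1)
    intro S hκS
    by_contra hcon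
    push_neg at hcon
    obtain ⟨h1, h2⟩ := hcon
    rw [hT] at h1 h2
    have hκc : κ Sᶜ < k := by rw [hcompl]; exact hκS
    have e1 : ¬ ((W \ S).card < (S ∩ W).card) := fun h => h1 ⟨hκS, h⟩
    have e2 : ¬ ((W \ Sᶜ).card < (Sᶜ ∩ W).card) := fun h => h2 ⟨hκc, h⟩
    rw [hcard1, hcard2] at e2
    have heq : (S ∩ W).card = (W \ S).card := le_antisymm (not_lt.1 e1) (not_lt.1 e2)
    have hn := hsum S
    have hk' := key S
    have hm : (W.card : ℝ) = 2 * ((S ∩ W).card : ℝ) := by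
      rw [← hn, heq]; push_cast; ring
    rw [hk, hm] at hκS
    rw [← heq] at hk'
    nlinarith [sq_nonneg ((S ∩ W).card : ℝ), hwW,
      mul_nonneg (mul_nonneg (Nat.cast_nonneg (S ∩ W).card : (0:ℝ) ≤ _)
        (Nat.cast_nonneg (S ∩ W).card : (0:ℝ) ≤ _)) hwW.le]
  · -- (T.2)
    intro S₁ h1 S₂ h2 S₃ h3
    rw [hT] at h1 h2 h3
    have bound : ∀ S : Finset V, κ S < k → (W \ S).card < (S ∩ W).card →
        3 * ((W \ S).card : ℝ) < (W.card : ℝ) := by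
      intro S hκS hlt
      have hk' := key S
      have hn := hsum S
      have hab : ((S ∩ W).card : ℝ) + ((W \ S).card : ℝ) = (W.card : ℝ) := by
        exact_mod_cast hn
      have hltR : ((W \ S).card : ℝ) < ((S ∩ W).card : ℝ) := by exact_mod_cast hlt
      set a := ((W \ S).card : ℝ) with ha
      set b := ((S ∩ W).card : ℝ) with hb
      rw [hk, ← hab] at hκS
      -- b*a*wW ≤ κ S < (2/9)(b+a)^2 wW
      have hba : b * a < (2/9) * (b + a)^2 := by
        have h9 : b * a * wW < (2/9) * (b + a)^2 * wW := lt_of_le_of_lt hk' hκS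
        exact lt_of_mul_lt_mul_right (by linarith) hwW.le
      by_contra hcon
      push_neg at hcon
      rw [← hab] at hcon
      have ht1 : (0:ℝ) ≤ 2 * a - b := by linarith
      have ht2 : (0:ℝ) ≤ 2 * b - a := by linarith
      nlinarith [mul_nonneg ht1 ht2]
    have b1 := bound S₁ h1.1 h1.2
    have b2 := bound S₂ h2.1 h2.2
    have b3 := bound S₃ h3.1 h3.2
    have hsub : W \ (S₁ ∩ S₂ ∩ S₃) ⊆ (W \ S₁) ∪ (W \ S₂) ∪ (W \ S₃) := by
      intro x hx
      simp only [Finset.mem_sdiff, Finset.mem_union, Finset.mem_inter] at hx ⊢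
      tauto
    have hcardle : (W \ (S₁ ∩ S₂ ∩ S₃)).card
        ≤ (W \ S₁).card + (W \ S₂).card + (W \ S₃).card := by
      calc (W \ (S₁ ∩ S₂ ∩ S₃)).card ≤ ((W \ S₁) ∪ (W \ S₂) ∪ (W \ S₃)).card :=
            Finset.card_le_card hsub
        _ ≤ ((W \ S₁) ∪ (W \ S₂)).card + (W \ S₃).card := Finset.card_union_le _ _
        _ ≤ (W \ S₁).card + (W \ S₂).card + (W \ S₃).card := by
            have := Finset.card_union_le (W \ S₁) (W \ S₂); omega
    have hlt : (W \ (S₁ ∩ S₂ ∩ S₃)).card < W.card := by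
      have hR : ((W \ S₁).card : ℝ) + ((W \ S₂).card : ℝ) + ((W \ S₃).card : ℝ)
          < (W.card : ℝ) := by linarith
      have : ((W \ S₁).card + (W \ S₂).card + (W \ S₃).card : ℕ) < W.card := by
        exact_mod_cast hR
      omega
    have hne : (W ∩ (S₁ ∩ S₂ ∩ S₃)).Nonempty := by
      by_contra hemp
      rw [Finset.not_nonempty_iff_eq_empty] at hemp
      have hself : W \ (S₁ ∩ S₂ ∩ S₃) = W := by
        ext x
        simp only [Finset.mem_sdiff]
        constructor
        · exact fun h => h.1
        · intro hxW
          refine ⟨hxW, fun hxS => ?_⟩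
          exact Finset.notMem_empty x (hemp ▸ Finset.mem_inter.2 ⟨hxW, hxS⟩)
      rw [hself] at hlt
      exact lt_irrefl _ hlt
    obtain ⟨x, hx⟩ := hne
    exact ⟨x, (Finset.mem_inter.1 hx).2⟩
  · -- (T.3)
    intro x hx
    rw [hT] at hx
    obtain ⟨-, hlt⟩ := hx
    have h1 : ({x} ∩ W).card ≤ 1 :=
      le_trans (Finset.card_le_card Finset.inter_subset_left) (by simp)
    have h2 : W.card - 1 ≤ (W \ {x}).card := by
      have := Finset.le_card_sdiff ({x} : Finset V) W
      simpa using this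
    omega
end
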